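/- Suppose A belongs to the class 𝒜, Φ satisfies condition δ2 and Φ satisfies condition (*). Then for every ε ∈ (0,1) there exists δ ∈ (0,1) such that for every x̄ ∈ l_Φ^A(X), ρ_Φ^A(x̄) ≤ 1 − ε implies ‖x̄‖_Φ^A ≤ 1 − δ. -/

import Mathlib

open Filter Topology

/-- An Orlicz function: convex, nondecreasing, continuous on `[0,∞)`,
vanishing at `0`, positive on `(0,∞)`, tending to `∞` at `∞`. -/
structure IsOrliczFn (φ : ℝ → ℝ) : Prop where
  convexOn : ConvexOn ℝ (Set.Ici (0 : ℝ)) φ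
  monotoneOn : MonotoneOn φ (Set.Ici (0 : ℝ))
  continuousOn : ContinuousOn φ (Set.Ici (0 : ℝ))
  map_zero : φ 0 = 0
  pos : ∀ t : ℝ, 0 < t → 0 < φ t
  tendsto_atTop : Filter.Tendsto φ Filter.atTop Filter.atTop

/-- A Musielak-Orlicz function: a sequence of Orlicz functions. -/
def IsMusielakOrlicz (Φ : ℕ → ℝ → ℝ) : Prop := ∀ n, IsOrliczFn (Φ n)

/-- Condition δ₂ for a Musielak-Orlicz function. -/
def MOCondDelta2 (Φ : ℕ → ℝ → ℝ) : Prop :=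
  ∃ K > (0 : ℝ), ∃ δ > (0 : ℝ), ∃ c : ℕ → ℝ, (∀ n, 0 ≤ c n) ∧ Summable c ∧
    ∀ n : ℕ, ∀ x : ℝ, 0 ≤ x → Φ n x ≤ δ → Φ n (2 * x) ≤ K * Φ n x + c n

/-- Condition (*) for a Musielak-Orlicz function. -/
def MOCondStar (Φ : ℕ → ℝ → ℝ) : Prop :=
  ∀ ε : ℝ, ε ∈ Set.Ioo (0 : ℝ) 1 → ∃ δ > (0 : ℝ), ∀ n : ℕ, ∀ u : ℝ, 0 ≤ u →
    Φ n u < 1 - ε → Φ n ((1 + δ) * u) ≤ 1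

/-- The class 𝒜 of infinite matrices: every column is nonzero. -/
def MatrixClassA (a : ℕ → ℕ → ℝ) : Prop := ∀ k, ∃ n, a n k ≠ 0

/-- A triangle matrix: nonzero diagonal, zero above the diagonal. -/
def IsTriangle (a : ℕ → ℕ → ℝ) : Prop := (∀ n, a n n ≠ 0) ∧ ∀ n k, n < k → a n k = 0

/-- The `n`-th row sum `∑_k |a_{nk}| ‖x_k‖`. -/
noncomputable def rowSum {X : Type*} [NormedAddCommGroup X]
    (a : ℕ → ℕ → ℝ) (x : ℕ → X) (n : ℕ) : ℝ :=
  ∑' k, |a n k| * ‖x k‖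

/-- Membership in the generalized Musielak-Orlicz sequence space `l_Φ^A(X)`:
`x` is a bounded sequence whose row sums are finite and
`∑_n φ_n(rowSum_n / σ) < ∞` for some `σ > 0`. -/
def MemL {X : Type*} [NormedAddCommGroup X]
    (Φ : ℕ → ℝ → ℝ) (a : ℕ → ℕ → ℝ) (x : ℕ → X) : Prop :=
  (∃ C : ℝ, ∀ k, ‖x k‖ ≤ C) ∧ (∀ n, Summable fun k => |a n k| * ‖x k‖) ∧
    ∃ σ > (0 : ℝ), Summable fun n => Φ n (rowSum a x n / σ)

/-- Membership in `h_Φ^A(X)`: as `MemL` but for every `σ > 0`. -/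
def MemH {X : Type*} [NormedAddCommGroup X]
    (Φ : ℕ → ℝ → ℝ) (a : ℕ → ℕ → ℝ) (x : ℕ → X) : Prop :=
  (∃ C : ℝ, ∀ k, ‖x k‖ ≤ C) ∧ (∀ n, Summable fun k => |a n k| * ‖x k‖) ∧
    ∀ σ > (0 : ℝ), Summable fun n => Φ n (rowSum a x n / σ)

/-- The Luxemburg-type norm `‖x‖_Φ^A`. -/
noncomputable def ANorm {X : Type*} [NormedAddCommGroup X]
    (Φ : ℕ → ℝ → ℝ) (a : ℕ → ℕ → ℝ) (x : ℕ → X) : ℝ :=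
  sInf {σ : ℝ | 0 < σ ∧ (Summable fun n => Φ n (rowSum a x n / σ)) ∧
    (∑' n, Φ n (rowSum a x n / σ)) ≤ 1}

/-- The modular `ρ_Φ^A(x) = ∑_n φ_n(∑_k |a_{nk}| ‖x_k‖)`. -/
noncomputable def rhoA {X : Type*} [NormedAddCommGroup X]
    (Φ : ℕ → ℝ → ℝ) (a : ℕ → ℕ → ℝ) (x : ℕ → X) : ℝ :=
  ∑' n, Φ n (rowSum a x n)

/-- The `m`-th section of a sequence: first `m` coordinates kept, rest zero. -/
def sect {X : Type*} [Zero X] (x : ℕ → X) (m : ℕ) : ℕ → X :=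
  fun k => if k < m then x k else 0

private lemma orlicz_mono {φ : ℝ → ℝ} (h : IsOrliczFn φ) {s t : ℝ} (hs : 0 ≤ s) (hst : s ≤ t) :
    φ s ≤ φ t := h.monotoneOn (Set.mem_Ici.mpr hs) (Set.mem_Ici.mpr (hs.trans hst)) hst

private lemma orlicz_nonneg {φ : ℝ → ℝ} (h : IsOrliczFn φ) {t : ℝ} (ht : 0 ≤ t) : 0 ≤ φ t := by
  have := orlicz_mono h le_rfl ht
  rwa [h.map_zero] at this

private lemma rowSum_nonneg {X : Type*} [NormedAddCommGroup X] (a : ℕ → ℕ → ℝ) (x : ℕ → X)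
    (n : ℕ) : 0 ≤ rowSum a x n := tsum_nonneg fun k => by positivity

private lemma summable_double {Φ : ℕ → ℝ → ℝ} (hΦ : IsMusielakOrlicz Φ) (hδ : MOCondDelta2 Φ)
    {u : ℕ → ℝ} (hu : ∀ n, 0 ≤ u n) (hs : Summable fun n => Φ n (u n)) :
    Summable fun n => Φ n (2 * u n) := by
  obtain ⟨K, hK, δ₀, hδ₀, c, hc0, hcs, h2⟩ := hδ
  have h0 : ∀ᶠ n in atTop, Φ n (u n) < δ₀ := hs.tendsto_atTop_zero.eventually_lt_const hδ₀
  obtain ⟨N, hN⟩ := eventually_atTop.mp h0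
  rw [← summable_nat_add_iff N]
  have hs' : Summable fun n => K * Φ (n + N) (u (n + N)) + c (n + N) :=
    (((summable_nat_add_iff N).2 hs).mul_left K).add ((summable_nat_add_iff N).2 hcs)
  refine Summable.of_nonneg_of_le
    (fun n => orlicz_nonneg (hΦ _) (by have := hu (n + N); linarith)) (fun n => ?_) hs'
  exact h2 _ _ (hu _) (hN _ (Nat.le_add_left N n)).le

private lemma summable_pow_double {Φ : ℕ → ℝ → ℝ} (hΦ : IsMusielakOrlicz Φ)
    (hδ : MOCondDelta2 Φ) {u : ℕ → ℝ} (hu : ∀ n, 0 ≤ u n)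
    (hs : Summable fun n => Φ n (u n)) (m : ℕ) :
    Summable fun n => Φ n (2 ^ m * u n) := by
  induction m with
  | zero => simpa using hs
  | succ m ih =>
    have h := summable_double hΦ hδ (u := fun n => 2 ^ m * u n) (fun n => mul_nonneg (by positivity) (hu n)) ih
    exact h.congr fun n => congrArg (Φ n) (by ring)

private lemma summable_at_one {X : Type*} [NormedAddCommGroup X] {Φ : ℕ → ℝ → ℝ}
    (hΦ : IsMusielakOrlicz Φ) (hδ : MOCondDelta2 Φ)
    {a : ℕ → ℕ → ℝ} {x : ℕ → X} (hx : MemL Φ a x) :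
    Summable fun n => Φ n (rowSum a x n) := by
  obtain ⟨-, -, σ, hσ, hs⟩ := hx
  obtain ⟨m, hm⟩ := pow_unbounded_of_one_lt σ one_lt_two
  have h1 : Summable fun n => Φ n (2 ^ m * (rowSum a x n / σ)) :=
    summable_pow_double hΦ hδ (fun n => by have := rowSum_nonneg a x n; positivity) hs m
  refine Summable.of_nonneg_of_le (fun n => orlicz_nonneg (hΦ n) (rowSum_nonneg a x n))
    (fun n => ?_) h1
  refine orlicz_mono (hΦ n) (rowSum_nonneg a x n) ?_
  have hv := rowSum_nonneg a x n
  calc rowSum a x n = 2 ^ m * (rowSum a x n / 2 ^ m) := by field_simp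
    _ ≤ 2 ^ m * (rowSum a x n / σ) := by gcongr

/-- for `A ∈ 𝒜`, `Φ ∈ δ₂` satisfying condition (*): for every
`ε ∈ (0,1)` there is `δ ∈ (0,1)` with `ρ_Φ^A(x̄) ≤ 1 - ε → ‖x̄‖_Φ^A ≤ 1 - δ`. -/
theorem modular_le_implies_norm_le
    {X : Type*} [NormedAddCommGroup X] [NormedSpace ℝ X] [CompleteSpace X]
    (Φ : ℕ → ℝ → ℝ) (hΦ : IsMusielakOrlicz Φ) (hδ : MOCondDelta2 Φ)
    (hstar : MOCondStar Φ)
    (a : ℕ → ℕ → ℝ) (hA : MatrixClassA a) :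
    ∀ ε : ℝ, ε ∈ Set.Ioo (0 : ℝ) 1 → ∃ δ ∈ Set.Ioo (0 : ℝ) 1,
      ∀ x : ℕ → X, MemL Φ a x → rhoA Φ a x ≤ 1 - ε → ANorm Φ a x ≤ 1 - δ := by
  rintro ε ⟨hε0, hε1⟩
  obtain ⟨ds, hds, hstar'⟩ := hstar (ε / 2) ⟨by linarith, by linarith⟩
  obtain ⟨K, hK, δ₀, hδ₀, c, hc0, hcs, h2⟩ := id hδ
  set C := ∑' n, c n with hCdef
  have hC0 : 0 ≤ C := tsum_nonneg hc0
  set D : ℝ := 1 / δ₀ + ds * (K + C) with hDdef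
  have hDnn : 0 ≤ D := by positivity
  set θ : ℝ := min (1 / (1 + ds)) (ε / (D + 1)) with hθdef
  have hθ0 : 0 < θ := lt_min (by positivity) (by positivity)
  have hθ1 : θ ≤ 1 := (min_le_left _ _).trans (by rw [div_le_one] <;> linarith)
  set η : ℝ := θ * ds with hηdef
  have hη0 : 0 < η := mul_pos hθ0 hds
  have hη1 : η < 1 := by
    have h := min_le_left (1 / (1 + ds)) (ε / (D + 1))
    have h1 : η ≤ 1 / (1 + ds) * ds := mul_le_mul_of_nonneg_right h hds.le
    have h2 : 1 / (1 + ds) * ds < 1 := by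
      rw [div_mul_eq_mul_div, one_mul, div_lt_one] <;> linarith
    linarith
  have hbudget : θ * (1 / δ₀) + η * (K + C) ≤ ε := by
    have h1 : θ ≤ ε / (D + 1) := min_le_right _ _
    have heq : θ * (1 / δ₀) + η * (K + C) = θ * D := by rw [hηdef, hDdef]; ring
    rw [heq]
    calc θ * D ≤ ε / (D + 1) * D := mul_le_mul_of_nonneg_right h1 hDnn
      _ ≤ ε := by rw [div_mul_eq_mul_div, div_le_iff₀ (by linarith)]; nlinarith
  refine ⟨η / (1 + η), ⟨by positivity, by rw [div_lt_one (by linarith)]; linarith⟩, ?_⟩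
  intro x hx hrho
  set v : ℕ → ℝ := rowSum a x with hvdef
  have hv : ∀ n, 0 ≤ v n := rowSum_nonneg a x
  set t : ℕ → ℝ := fun n => Φ n (v n) with htdef
  have ht0 : ∀ n, 0 ≤ t n := fun n => orlicz_nonneg (hΦ n) (hv n)
  have hS : Summable t := summable_at_one hΦ hδ hx
  have hsum : ∑' n, t n ≤ 1 - ε := hrho
  have htsum0 : 0 ≤ ∑' n, t n := tsum_nonneg ht0
  have hterm : ∀ n, t n ≤ 1 - ε := fun n => (hS.le_tsum n fun m _ => ht0 m).trans hsum
  -- the bad set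
  have hev : ∀ᶠ n in atTop, t n < δ₀ := hS.tendsto_atTop_zero.eventually_lt_const hδ₀
  obtain ⟨N, hN⟩ := eventually_atTop.mp hev
  have hBfin : {n : ℕ | δ₀ ≤ t n}.Finite := by
    refine Set.Finite.subset (Finset.range N).finite_toSet fun n hn => ?_
    simp only [Finset.coe_range, Set.mem_Iio]
    by_contra h
    exact absurd (hN n (le_of_not_gt h)) (not_lt.2 hn)
  set B : Finset ℕ := hBfin.toFinset with hBdef
  have hmemB : ∀ n, n ∈ B ↔ δ₀ ≤ t n := fun n => hBfin.mem_toFinset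
  have hcard : (B.card : ℝ) ≤ 1 / δ₀ := by
    rw [le_div_iff₀ hδ₀]
    have h1 : ∑ n ∈ B, δ₀ ≤ ∑ n ∈ B, t n :=
      Finset.sum_le_sum fun n hn => (hmemB n).mp hn
    have h2 : ∑ n ∈ B, t n ≤ ∑' n, t n := hS.sum_le_tsum B (fun n _ => ht0 n)
    rw [Finset.sum_const, nsmul_eq_mul] at h1
    linarith
  -- pointwise bound
  set g : ℕ → ℝ := fun n => t n + ((if n ∈ B then θ else 0) + η * K * t n + η * c n) with hgdef
  have hgb : ∀ n, Φ n ((1 + η) * v n) ≤ g n := by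
    intro n
    have hprod1 : 0 ≤ η * K * t n := mul_nonneg (mul_nonneg hη0.le hK.le) (ht0 n)
    have hprod2 : 0 ≤ η * c n := mul_nonneg hη0.le (hc0 n)
    by_cases hn : n ∈ B
    · have ht' : t n < 1 - ε / 2 := lt_of_le_of_lt (hterm n) (by linarith)
      have hb1 : Φ n ((1 + ds) * v n) ≤ 1 := hstar' n (v n) (hv n) ht'
      have hmem2 : (1 + ds) * v n ∈ Set.Ici (0 : ℝ) :=
        Set.mem_Ici.mpr (mul_nonneg (by linarith) (hv n))
      have hconv := (hΦ n).convexOn.2 (Set.mem_Ici.mpr (hv n)) hmem2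
        (by linarith : (0:ℝ) ≤ 1 - θ) hθ0.le (by ring)
      rw [smul_eq_mul, smul_eq_mul, smul_eq_mul, smul_eq_mul] at hconv
      have harg : (1 - θ) * v n + θ * ((1 + ds) * v n) = (1 + η) * v n := by
        rw [hηdef]; ring
      rw [harg] at hconv
      have hθt : 0 ≤ θ * t n := mul_nonneg hθ0.le (ht0 n)
      have hb2 : θ * Φ n ((1 + ds) * v n) ≤ θ := by nlinarith
      simp only [hgdef, if_pos hn]
      have : (1 - θ) * Φ n (v n) = (1 - θ) * t n := rfl
      rw [this] at hconv
      linarith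
    · have htn : t n ≤ δ₀ := le_of_lt (lt_of_not_ge fun h => hn ((hmemB n).mpr h))
      have hb2 : Φ n (2 * v n) ≤ K * t n + c n := h2 n (v n) (hv n) htn
      have hmem2 : 2 * v n ∈ Set.Ici (0 : ℝ) := Set.mem_Ici.mpr (by linarith [hv n])
      have hconv := (hΦ n).convexOn.2 (Set.mem_Ici.mpr (hv n)) hmem2
        (by linarith : (0:ℝ) ≤ 1 - η) hη0.le (by ring)
      rw [smul_eq_mul, smul_eq_mul, smul_eq_mul, smul_eq_mul] at hconv
      have harg : (1 - η) * v n + η * (2 * v n) = (1 + η) * v n := by ring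
      rw [harg] at hconv
      simp only [hgdef, if_neg hn]
      have hηt : 0 ≤ η * t n := mul_nonneg hη0.le (ht0 n)
      have h1 : (1 - η) * Φ n (v n) = (1 - η) * t n := rfl
      rw [h1] at hconv
      nlinarith
  -- summability
  have hite : Summable fun n => (if n ∈ B then θ else 0 : ℝ) :=
    summable_of_ne_finset_zero (s := B) fun n hn => if_neg hn
  have hg_summ : Summable g :=
    hS.add (((hite.add (hS.mul_left (η * K)))).add (hcs.mul_left η)) |>.congr fun n => by
      simp only [hgdef]
  have hw_summ : Summable fun n => Φ n ((1 + η) * v n) :=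
    Summable.of_nonneg_of_le
      (fun n => orlicz_nonneg (hΦ n) (mul_nonneg (by linarith) (hv n))) hgb hg_summ
  -- tsum bound
  have htsum_ite : ∑' n, (if n ∈ B then θ else 0 : ℝ) ≤ θ * (1 / δ₀) := by
    rw [tsum_eq_sum (s := B) fun n hn => if_neg hn]
    have : ∑ n ∈ B, (if n ∈ B then θ else 0 : ℝ) = (B.card : ℝ) * θ := by
      rw [Finset.sum_congr rfl fun n hn => if_pos hn, Finset.sum_const, nsmul_eq_mul]
    rw [this]
    calc (B.card : ℝ) * θ ≤ (1 / δ₀) * θ := mul_le_mul_of_nonneg_right hcard hθ0.le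
      _ = θ * (1 / δ₀) := mul_comm _ _
  have htsum_g : ∑' n, g n ≤ 1 := by
    have e1 : ∑' n, g n = (∑' n, t n) + ((∑' n, (if n ∈ B then θ else 0 : ℝ))
        + (η * K) * (∑' n, t n) + η * C) := by
      rw [hCdef, ← tsum_mul_left, ← tsum_mul_left,
        ← hite.tsum_add (hS.mul_left (η * K)),
        ← (hite.add (hS.mul_left (η * K))).tsum_add (hcs.mul_left η),
        ← hS.tsum_add ((hite.add (hS.mul_left (η * K))).add (hcs.mul_left η))]
    rw [e1]
    have h3 : (η * K) * (∑' n, t n) ≤ η * K := by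
      have := mul_le_mul_of_nonneg_left (show (∑' n, t n) ≤ 1 by linarith)
        (mul_nonneg hη0.le hK.le)
      linarith
    have h4 : θ * (1 / δ₀) + η * K + η * C ≤ ε := by
      have : θ * (1 / δ₀) + (η * K + η * C) = θ * (1 / δ₀) + η * (K + C) := by ring
      linarith [hbudget, this]
    linarith [htsum_ite]
  -- conclusion
  have hδeq : (1 : ℝ) - η / (1 + η) = 1 / (1 + η) := by field_simp; ring
  have hfun_eq : (fun n => Φ n (rowSum a x n / (1 - η / (1 + η))))
      = fun n => Φ n ((1 + η) * v n) := by
    funext n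
    rw [hδeq, div_div_eq_mul_div, div_one, mul_comm, hvdef]
  have hmem : (1 - η / (1 + η)) ∈ {σ : ℝ | 0 < σ ∧
      (Summable fun n => Φ n (rowSum a x n / σ)) ∧
      (∑' n, Φ n (rowSum a x n / σ)) ≤ 1} := by
    refine ⟨by rw [hδeq]; positivity, ?_, ?_⟩
    · rw [hfun_eq]; exact hw_summ
    · rw [hfun_eq]
      exact (hw_summ.tsum_le_tsum hgb hg_summ).trans htsum_g
  exact csInf_le ⟨0, fun σ hσ => hσ.1.le⟩ hmem
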